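/- Every eigenvalue of the nested-case transfer matrix T, regarded as a matrix over the complex numbers, is a real number. -/

import Mathlib

open Matrix BigOperators

/-- The nested-case transfer matrix `T` of CRSBM: coordinates are indexed
by `Fin qs` (the first `qb` coordinates correspond to the brother communities
of node `i`'s own category). -/
noncomputable def nestedT (qs qb : ℕ) (γ ωin ωout : ℝ) :
    Matrix (Fin qs) (Fin qs) ℝ :=
  let Z : ℝ := (qb : ℝ) * γ + ((qs : ℝ) - (qb : ℝ))
  let ψ : Fin qs → ℝ := fun r => if (r : ℕ) < qb then γ / Z else 1 / Z
  let F : Matrix (Fin qs) (Fin qs) ℝ :=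
    Matrix.diagonal (fun r => if (r : ℕ) < qb then (1 : ℝ) else γ)
  let Ω : Matrix (Fin qs) (Fin qs) ℝ :=
    Matrix.of fun r s => if r = s then ωin else ωout
  let M : Matrix (Fin qs) (Fin qs) ℝ := Matrix.diagonal ψ * Ω * F
  let D : Matrix (Fin qs) (Fin qs) ℝ := Matrix.diagonal (fun r => ∑ s, M r s)
  (1 - Matrix.vecMulVec ψ (fun _ => 1)) * (D⁻¹ * M)

lemma sum_if_lt (qs qb : ℕ) (h : qb ≤ qs) (c₁ c₂ : ℝ) :
    ∑ s : Fin qs, (if (s : ℕ) < qb then c₁ else c₂)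
      = (qb : ℝ) * c₁ + ((qs : ℝ) - (qb : ℝ)) * c₂ := by
  rw [Fin.sum_univ_eq_sum_range (fun i => if i < qb then c₁ else c₂) qs]
  rw [Finset.range_eq_Ico, ← Finset.sum_Ico_consecutive _ (Nat.zero_le qb) h]
  have h1 : ∑ i ∈ Finset.Ico 0 qb, (if i < qb then c₁ else c₂) = (qb : ℝ) * c₁ := by
    rw [Finset.sum_congr rfl (fun i hi => if_pos (Finset.mem_Ico.mp hi).2), Finset.sum_const,
      Nat.card_Ico, Nat.sub_zero, nsmul_eq_mul]
  have h2 : ∑ i ∈ Finset.Ico qb qs, (if i < qb then c₁ else c₂) = ((qs : ℝ) - (qb : ℝ)) * c₂ := by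
    rw [Finset.sum_congr rfl (fun i hi => if_neg (not_lt.mpr (Finset.mem_Ico.mp hi).1)),
      Finset.sum_const, Nat.card_Ico, nsmul_eq_mul, Nat.cast_sub h]
  rw [h1, h2]

lemma gensum (qs qb : ℕ) (h : qb ≤ qs) (win wout c₁ c₂ : ℝ) (r : Fin qs) :
    ∑ s : Fin qs, (if r = s then win else wout) * (if (s : ℕ) < qb then c₁ else c₂)
      = wout * ((qb : ℝ) * c₁ + ((qs : ℝ) - (qb : ℝ)) * c₂)
        + (win - wout) * (if (r : ℕ) < qb then c₁ else c₂) := by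
  have key : ∀ s : Fin qs, (if r = s then win else wout) * (if (s : ℕ) < qb then c₁ else c₂)
      = wout * (if (s : ℕ) < qb then c₁ else c₂)
        + (if r = s then (win - wout) * (if (s : ℕ) < qb then c₁ else c₂) else 0) := by
    intro s
    by_cases hrs : r = s
    · subst hrs; simp only [if_pos rfl]; split <;> ring
    · simp [hrs]
  simp only [key]
  rw [Finset.sum_add_distrib, ← Finset.mul_sum, sum_if_lt qs qb h, Finset.sum_ite_eq]
  simp

lemma gensum' (qs qb : ℕ) (h : qb ≤ qs) (win wout c₁ c₂ : ℝ) (r : Fin qs) :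
    ∑ s : Fin qs, (if s = r then win else wout) * (if (s : ℕ) < qb then c₁ else c₂)
      = wout * ((qb : ℝ) * c₁ + ((qs : ℝ) - (qb : ℝ)) * c₂)
        + (win - wout) * (if (r : ℕ) < qb then c₁ else c₂) := by
  have key : ∀ s : Fin qs, (if s = r then win else wout) * (if (s : ℕ) < qb then c₁ else c₂)
      = wout * (if (s : ℕ) < qb then c₁ else c₂)
        + (if s = r then (win - wout) * (if (s : ℕ) < qb then c₁ else c₂) else 0) := by
    intro s
    by_cases hrs : s = r
    · subst hrs; simp only [if_pos rfl]; split <;> ring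
    · simp [hrs]
  simp only [key]
  rw [Finset.sum_add_distrib, ← Finset.mul_sum, sum_if_lt qs qb h, Finset.sum_ite_eq']
  simp

lemma factored {qs : ℕ} (ψ Fv e : Fin qs → ℝ) (Ω : Matrix (Fin qs) (Fin qs) ℝ)
    (hψ : ∀ r, ψ r ≠ 0) (he : ∀ r, e r ≠ 0)
    (hsum : ∀ r, ∑ s, ψ r * Ω r s * Fv s = ψ r * e r) :
    (1 - Matrix.vecMulVec ψ (fun _ => 1)) *
        ((Matrix.diagonal (fun r => ∑ s, (Matrix.diagonal ψ * Ω * Matrix.diagonal Fv) r s))⁻¹ *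
          (Matrix.diagonal ψ * Ω * Matrix.diagonal Fv))
      = Matrix.of fun r s => Ω r s * Fv s / e r - ψ r * ∑ t, Ω t s * Fv s / e t := by
  have hA : ∀ t s, (Matrix.diagonal ψ * Ω * Matrix.diagonal Fv) t s = ψ t * Ω t s * Fv s := by
    intro t s; rw [Matrix.mul_diagonal, Matrix.diagonal_mul]
  have hD : Matrix.diagonal (fun r => ∑ s, (Matrix.diagonal ψ * Ω * Matrix.diagonal Fv) r s)
      = Matrix.diagonal (fun r => ψ r * e r) := by
    exact congrArg Matrix.diagonal (funext fun r => by
      rw [← hsum r]; exact Finset.sum_congr rfl fun s _ => hA r s)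
  have hDinv : (Matrix.diagonal (fun r => ψ r * e r))⁻¹
      = Matrix.diagonal (fun r => (ψ r * e r)⁻¹) := by
    refine Matrix.inv_eq_right_inv ?_
    rw [Matrix.diagonal_mul_diagonal, ← Matrix.diagonal_one]
    exact congrArg Matrix.diagonal (funext fun r =>
      mul_inv_cancel₀ (mul_ne_zero (hψ r) (he r)))
  rw [hD, hDinv, Matrix.sub_mul, Matrix.one_mul]
  have hW : ∀ t s, (Matrix.diagonal (fun r => (ψ r * e r)⁻¹) *
      (Matrix.diagonal ψ * Ω * Matrix.diagonal Fv)) t s = Ω t s * Fv s / e t := by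
    intro t s; rw [Matrix.diagonal_mul, hA]
    field_simp [hψ t, he t]
  ext r s
  rw [Matrix.sub_apply, Matrix.of_apply, hW r s, Matrix.mul_apply]
  congr 1
  rw [Finset.mul_sum]
  refine Finset.sum_congr rfl fun t _ => ?_
  rw [Matrix.vecMulVec_apply, hW t s]
  ring

set_option maxHeartbeats 2000000 in
lemma nestedT_ann (qs qb : ℕ) (hqb : 2 ≤ qb) (hqs : 2 * qb ≤ qs)
    (γ ωin ωout : ℝ) (hγ : 1 < γ) (hω : ωout < ωin) (hω0 : 0 < ωout) :
    ∃ l1 l2 t : ℝ,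
      nestedT qs qb γ ωin ωout * (nestedT qs qb γ ωin ωout - l1 • 1) *
        (nestedT qs qb γ ωin ωout - l2 • 1) * (nestedT qs qb γ ωin ωout - t • 1) = 0 := by
  have hqble : qb ≤ qs := by omega
  have hγ0 : (0:ℝ) < γ := lt_trans one_pos hγ
  have hwin0 : (0:ℝ) < ωin := lt_trans hω0 hω
  have ha0 : (0:ℝ) < ωin - ωout := sub_pos.mpr hω
  have hn1 : (0:ℝ) < (qb:ℝ) := by
    have : 0 < qb := by omega
    exact_mod_cast this
  have hn2 : (0:ℝ) < (qs:ℝ) - (qb:ℝ) := by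
    have : qb < qs := by omega
    have := (Nat.cast_lt (α := ℝ)).mpr this
    linarith
  obtain ⟨T, hTdef⟩ : ∃ x : Matrix (Fin qs) (Fin qs) ℝ, x = nestedT qs qb γ ωin ωout := ⟨_, rfl⟩
  obtain ⟨Z, hZdef⟩ : ∃ x : ℝ, x = (qb : ℝ) * γ + ((qs : ℝ) - (qb : ℝ)) := ⟨_, rfl⟩
  have hZ : 0 < Z := by rw [hZdef]; nlinarith
  obtain ⟨Sγ, hSγdef⟩ : ∃ x : ℝ, x = (qb : ℝ) * 1 + ((qs : ℝ) - (qb : ℝ)) * γ := ⟨_, rfl⟩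
  have hSγ : 0 < Sγ := by rw [hSγdef]; nlinarith
  obtain ⟨d1, hd1def⟩ : ∃ x : ℝ, x = ωout * Sγ + (ωin - ωout) * 1 := ⟨_, rfl⟩
  obtain ⟨d2, hd2def⟩ : ∃ x : ℝ, x = ωout * Sγ + (ωin - ωout) * γ := ⟨_, rfl⟩
  have hd1 : 0 < d1 := by rw [hd1def]; nlinarith
  have hd2 : 0 < d2 := by rw [hd2def]; nlinarith
  obtain ⟨E, hEdef⟩ : ∃ x : ℝ, x = (qb:ℝ)/d1 + ((qs:ℝ)-(qb:ℝ))/d2 := ⟨_, rfl⟩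
  obtain ⟨κ1, hκ1def⟩ : ∃ x : ℝ, x = ωout * E + (ωin - ωout)/d1 := ⟨_, rfl⟩
  obtain ⟨κ2, hκ2def⟩ : ∃ x : ℝ, x = γ * (ωout * E + (ωin - ωout)/d2) := ⟨_, rfl⟩
  obtain ⟨l1, hl1def⟩ : ∃ x : ℝ, x = (ωin - ωout)/d1 := ⟨_, rfl⟩
  obtain ⟨l2, hl2def⟩ : ∃ x : ℝ, x = γ * (ωin - ωout)/d2 := ⟨_, rfl⟩
  obtain ⟨α, hαdef⟩ : ∃ x : ℝ, x = ((qb:ℝ)*ωout + ωin - ωout)/d1 - (qb:ℝ)*γ*κ1/Z := ⟨_, rfl⟩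
  obtain ⟨β, hβdef⟩ : ∃ x : ℝ, x = (qb:ℝ)*ωout/d2 - (qb:ℝ)*κ1/Z := ⟨_, rfl⟩
  obtain ⟨γγ, hγγdef⟩ : ∃ x : ℝ, x = ((qs:ℝ)-(qb:ℝ))*γ*ωout/d1 - ((qs:ℝ)-(qb:ℝ))*γ*κ2/Z := ⟨_, rfl⟩
  obtain ⟨δδ, hδδdef⟩ : ∃ x : ℝ, x = (((qs:ℝ)-(qb:ℝ))*ωout + ωin - ωout)*γ/d2 - ((qs:ℝ)-(qb:ℝ))*κ2/Z := ⟨_, rfl⟩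
  obtain ⟨τ, hτdef⟩ : ∃ x : ℝ, x = α + δδ := ⟨_, rfl⟩
  -- the key scalar identity (rank-one projection has determinant 0 on the 2-dim block)
  have hZne : ((qb : ℝ) * γ + ((qs : ℝ) - (qb : ℝ))) ≠ 0 := by
    have := ne_of_gt hZ; rwa [hZdef] at this
  have hdet : α * δδ = β * γγ := by
    rw [hαdef, hβdef, hγγdef, hδδdef, hκ1def, hκ2def, hEdef, hZdef]
    field_simp [ne_of_gt hd1, ne_of_gt hd2, hZne]
    ring
  -- entrywise formula for T
  have hT : T = Matrix.of fun r s =>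
      (Matrix.of fun r s : Fin qs => if r = s then ωin else ωout) r s *
        (if (s : ℕ) < qb then (1:ℝ) else γ) / (if (r : ℕ) < qb then d1 else d2)
      - (if (r : ℕ) < qb then γ / Z else 1 / Z) *
          ∑ t, (Matrix.of fun r s : Fin qs => if r = s then ωin else ωout) t s *
            (if (s : ℕ) < qb then (1:ℝ) else γ) / (if (t : ℕ) < qb then d1 else d2) := by
    rw [hTdef]
    unfold nestedT
    simp only [← hZdef]
    have hψne : ∀ r : Fin qs, (if (r : ℕ) < qb then γ / Z else 1 / Z) ≠ 0 := by
      intro r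
      by_cases hr : (r:ℕ) < qb <;> simp [hr, ne_of_gt hγ0, ne_of_gt hZ]
    have hene : ∀ r : Fin qs, (if (r : ℕ) < qb then d1 else d2) ≠ 0 := by
      intro r
      by_cases hr : (r:ℕ) < qb <;> simp [hr, ne_of_gt hd1, ne_of_gt hd2]
    have hsum : ∀ r : Fin qs,
        ∑ s, (if (r : ℕ) < qb then γ / Z else 1 / Z) *
            (Matrix.of fun r s : Fin qs => if r = s then ωin else ωout) r s *
            (if (s : ℕ) < qb then (1:ℝ) else γ)
          = (if (r : ℕ) < qb then γ / Z else 1 / Z) * (if (r : ℕ) < qb then d1 else d2) := by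
      intro r
      have step : ∀ s : Fin qs, (if (r : ℕ) < qb then γ / Z else 1 / Z) *
            (Matrix.of fun r s : Fin qs => if r = s then ωin else ωout) r s *
            (if (s : ℕ) < qb then (1:ℝ) else γ)
          = (if (r : ℕ) < qb then γ / Z else 1 / Z) *
            ((if r = s then ωin else ωout) * (if (s : ℕ) < qb then (1:ℝ) else γ)) := by
        intro s; rw [Matrix.of_apply]; ring
      simp only [step]
      rw [← Finset.mul_sum, gensum qs qb hqble ωin ωout 1 γ r]
      congr 1
      by_cases hr : (r:ℕ) < qb <;> simp only [hr, if_true, if_false] <;>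
        [rw [hd1def, hSγdef]; rw [hd2def, hSγdef]] <;> ring
    exact factored _ _ _ _ hψne hene hsum
  -- column sums
  have hCol : ∀ s : Fin qs,
      ∑ t : Fin qs, (if t = s then ωin else ωout) *
          (if (s : ℕ) < qb then (1:ℝ) else γ) / (if (t : ℕ) < qb then d1 else d2)
        = (if (s : ℕ) < qb then κ1 else κ2) := by
    intro s
    have step : ∀ t : Fin qs, (if t = s then ωin else ωout) *
          (if (s : ℕ) < qb then (1:ℝ) else γ) / (if (t : ℕ) < qb then d1 else d2)
        = (if t = s then ωin else ωout) *
            (if (t : ℕ) < qb then (if (s : ℕ) < qb then (1:ℝ) else γ)/d1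
              else (if (s : ℕ) < qb then (1:ℝ) else γ)/d2) := by
      intro t
      by_cases ht : (t:ℕ) < qb <;> simp only [ht, if_true, if_false] <;> ring
    simp only [step]
    rw [gensum' qs qb hqble ωin ωout _ _ s]
    by_cases hs : (s:ℕ) < qb <;> simp only [hs, if_true, if_false] <;>
      [rw [hκ1def, hEdef]; rw [hκ2def, hEdef]] <;> field_simp [ne_of_gt hd1, ne_of_gt hd2, ne_of_gt hZ] <;> ring
  have hTe : ∀ r s : Fin qs, T r s =
      (if r = s then ωin else ωout) * (if (s : ℕ) < qb then (1:ℝ) else γ) /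
          (if (r : ℕ) < qb then d1 else d2)
        - (if (r : ℕ) < qb then γ / Z else 1 / Z) * (if (s : ℕ) < qb then κ1 else κ2) := by
    intro r s
    rw [hT]
    simp only [Matrix.of_apply]
    rw [hCol s]
  clear hT
  -- basic mulVec computations
  have hmv : ∀ (A : Matrix (Fin qs) (Fin qs) ℝ) (w : Fin qs → ℝ) (i : Fin qs),
      (A *ᵥ w) i = ∑ s, A i s * w s := fun A w i => rfl
  have hsingle : ∀ (A : Matrix (Fin qs) (Fin qs) ℝ) (a b : Fin qs),
      A *ᵥ (Pi.single a 1 - Pi.single b 1) = fun i => A i a - A i b := by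
    intro A a b
    funext i
    simp only [hmv, Pi.sub_apply, Pi.single_apply, mul_sub, mul_ite, mul_one, mul_zero]
    rw [Finset.sum_sub_distrib, Finset.sum_ite_eq', Finset.sum_ite_eq']
    simp
  -- within-block difference eigenvectors
  have hδ1 : ∀ a b : Fin qs, (a:ℕ) < qb → (b:ℕ) < qb →
      T *ᵥ (Pi.single a 1 - Pi.single b 1) = l1 • (Pi.single a 1 - Pi.single b 1) := by
    intro a b haa hbb
    rw [hsingle T a b]
    funext r
    simp only [Pi.smul_apply, Pi.sub_apply, Pi.single_apply, smul_eq_mul]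
    rw [hTe r a, hTe r b]
    simp only [if_pos haa, if_pos hbb, hl1def]
    rcases eq_or_ne r a with rfl | hra
    · rcases eq_or_ne r b with rfl | hrb
      · ring
      · simp only [if_pos rfl, if_neg hrb, if_pos haa]
        field_simp [ne_of_gt hd1, ne_of_gt hd2, ne_of_gt hZ]
        simp only [if_true]
        ring
    · rcases eq_or_ne r b with rfl | hrb
      · simp only [if_pos rfl, if_neg hra, if_pos hbb]
        field_simp [ne_of_gt hd1, ne_of_gt hd2, ne_of_gt hZ]
        simp only [if_true]
        ring
      · simp only [if_neg hra, if_neg hrb]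
        ring
  have hδ2 : ∀ a b : Fin qs, ¬ (a:ℕ) < qb → ¬ (b:ℕ) < qb →
      T *ᵥ (Pi.single a 1 - Pi.single b 1) = l2 • (Pi.single a 1 - Pi.single b 1) := by
    intro a b haa hbb
    rw [hsingle T a b]
    funext r
    simp only [Pi.smul_apply, Pi.sub_apply, Pi.single_apply, smul_eq_mul]
    rw [hTe r a, hTe r b]
    simp only [if_neg haa, if_neg hbb, hl2def]
    rcases eq_or_ne r a with rfl | hra
    · rcases eq_or_ne r b with rfl | hrb
      · ring
      · simp only [if_pos rfl, if_neg hrb, if_neg haa]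
        field_simp [ne_of_gt hd1, ne_of_gt hd2, ne_of_gt hZ]
        simp only [if_true]
        ring
    · rcases eq_or_ne r b with rfl | hrb
      · simp only [if_pos rfl, if_neg hra, if_neg hbb]
        field_simp [ne_of_gt hd1, ne_of_gt hd2, ne_of_gt hZ]
        simp only [if_true]
        ring
      · simp only [if_neg hra, if_neg hrb]
        ring
  -- block indicator vectors
  obtain ⟨xv, hxvdef⟩ : ∃ x : Fin qs → ℝ, x = fun r : Fin qs => if (r:ℕ) < qb then (1:ℝ) else 0 := ⟨_, rfl⟩
  obtain ⟨yv, hyvdef⟩ : ∃ x : Fin qs → ℝ, x = fun r : Fin qs => if (r:ℕ) < qb then (0:ℝ) else 1 := ⟨_, rfl⟩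
  have hxv : ∀ r : Fin qs, xv r = if (r:ℕ) < qb then (1:ℝ) else 0 := fun r => by simp only [hxvdef]
  have hyv : ∀ r : Fin qs, yv r = if (r:ℕ) < qb then (0:ℝ) else 1 := fun r => by simp only [hyvdef]
  have hTx : T *ᵥ xv = fun r => α * xv r + β * yv r := by
    funext r
    rw [hmv]
    have hpt : ∀ s : Fin qs, T r s * xv s =
        (if r = s then ωin else ωout) *
            (if (s:ℕ) < qb then 1/(if (r : ℕ) < qb then d1 else d2) else 0)
          - (if (s:ℕ) < qb then (if (r : ℕ) < qb then γ / Z else 1 / Z) * κ1 else 0) := by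
      intro s
      rw [hTe r s, hxv s]
      by_cases hs : (s:ℕ) < qb <;> simp only [hs, if_true, if_false] <;> ring
    simp only [hpt]
    rw [Finset.sum_sub_distrib, gensum qs qb hqble ωin ωout _ 0 r, sum_if_lt qs qb hqble _ 0,
      hxv r, hyv r]
    by_cases hr : (r:ℕ) < qb <;> simp only [hr, if_true, if_false] <;>
      [rw [hαdef]; rw [hβdef]] <;> field_simp [ne_of_gt hd1, ne_of_gt hd2, ne_of_gt hZ] <;> ring
  have hTy : T *ᵥ yv = fun r => γγ * xv r + δδ * yv r := by
    funext r
    rw [hmv]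
    have hpt : ∀ s : Fin qs, T r s * yv s =
        (if r = s then ωin else ωout) *
            (if (s:ℕ) < qb then 0 else γ/(if (r : ℕ) < qb then d1 else d2))
          - (if (s:ℕ) < qb then 0 else (if (r : ℕ) < qb then γ / Z else 1 / Z) * κ2) := by
      intro s
      rw [hTe r s, hyv s]
      by_cases hs : (s:ℕ) < qb <;> simp only [hs, if_true, if_false] <;> ring
    simp only [hpt]
    rw [Finset.sum_sub_distrib, gensum qs qb hqble ωin ωout 0 _ r, sum_if_lt qs qb hqble 0 _,
      hxv r, hyv r]
    by_cases hr : (r:ℕ) < qb <;> simp only [hr, if_true, if_false] <;>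
      [rw [hγγdef]; rw [hδδdef]] <;> field_simp [ne_of_gt hd1, ne_of_gt hd2, ne_of_gt hZ] <;> ring
  -- the vectors u and v absorb the 2-dimensional block
  obtain ⟨u, hudef⟩ : ∃ x : Fin qs → ℝ, x = (α - τ) • xv + β • yv := ⟨_, rfl⟩
  obtain ⟨v, hvdef⟩ : ∃ x : Fin qs → ℝ, x = γγ • xv + (δδ - τ) • yv := ⟨_, rfl⟩
  have hu : (T - τ • 1) *ᵥ xv = u := by
    rw [Matrix.sub_mulVec, Matrix.smul_mulVec, Matrix.one_mulVec, hTx, hudef]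
    funext r
    simp only [Pi.sub_apply, Pi.add_apply, Pi.smul_apply, smul_eq_mul]
    ring
  have hv : (T - τ • 1) *ᵥ yv = v := by
    rw [Matrix.sub_mulVec, Matrix.smul_mulVec, Matrix.one_mulVec, hTy, hvdef]
    funext r
    simp only [Pi.sub_apply, Pi.add_apply, Pi.smul_apply, smul_eq_mul]
    ring
  have hTu : T *ᵥ u = 0 := by
    rw [hudef, Matrix.mulVec_add, Matrix.mulVec_smul, Matrix.mulVec_smul, hTx, hTy]
    funext r
    simp only [Pi.add_apply, Pi.smul_apply, smul_eq_mul, Pi.zero_apply]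
    linear_combination (-(xv r)) * hdet + (-(α * xv r + β * yv r)) * hτdef
  have hTv : T *ᵥ v = 0 := by
    rw [hvdef, Matrix.mulVec_add, Matrix.mulVec_smul, Matrix.mulVec_smul, hTx, hTy]
    funext r
    simp only [Pi.add_apply, Pi.smul_apply, smul_eq_mul, Pi.zero_apply]
    linear_combination (-(yv r)) * hdet + (-(γγ * xv r + δδ * yv r)) * hτdef
  -- eigen-peeling
  have peel : ∀ (c : ℝ) (w : Fin qs → ℝ), T *ᵥ w = c • w →
      ∀ a : ℝ, (T - a • 1) *ᵥ w = (c - a) • w := by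
    intro c w hw a
    rw [Matrix.sub_mulVec, hw, Matrix.smul_mulVec, Matrix.one_mulVec, ← sub_smul]
  have hNeig : ∀ (c : ℝ) (w : Fin qs → ℝ), T *ᵥ w = c • w →
      (T * (T - l1 • 1) * (T - l2 • 1) * (T - τ • 1)) *ᵥ w
        = ((c - τ) * (c - l2) * (c - l1) * c) • w := by
    intro c w hw
    rw [← Matrix.mulVec_mulVec, peel c w hw τ, Matrix.mulVec_smul, ← Matrix.mulVec_mulVec,
      peel c w hw l2, Matrix.mulVec_smul, ← Matrix.mulVec_mulVec, peel c w hw l1,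
      Matrix.mulVec_smul, hw, smul_smul, smul_smul, smul_smul, mul_assoc, mul_assoc]
  have hNx : (T * (T - l1 • 1) * (T - l2 • 1) * (T - τ • 1)) *ᵥ xv = 0 := by
    have hu0 : T *ᵥ u = (0:ℝ) • u := by rw [hTu, zero_smul]
    rw [← Matrix.mulVec_mulVec, hu, ← Matrix.mulVec_mulVec, peel 0 u hu0 l2, Matrix.mulVec_smul,
      ← Matrix.mulVec_mulVec, peel 0 u hu0 l1, Matrix.mulVec_smul, hTu]
    simp
  have hNy : (T * (T - l1 • 1) * (T - l2 • 1) * (T - τ • 1)) *ᵥ yv = 0 := by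
    have hv0 : T *ᵥ v = (0:ℝ) • v := by rw [hTv, zero_smul]
    rw [← Matrix.mulVec_mulVec, hv, ← Matrix.mulVec_mulVec, peel 0 v hv0 l2, Matrix.mulVec_smul,
      ← Matrix.mulVec_mulVec, peel 0 v hv0 l1, Matrix.mulVec_smul, hTv]
    simp
  -- now show all columns of N vanish
  refine ⟨l1, l2, τ, ?_⟩
  rw [← hTdef]
  obtain ⟨N, hNdef⟩ : ∃ x : Matrix (Fin qs) (Fin qs) ℝ,
      x = T * (T - l1 • 1) * (T - l2 • 1) * (T - τ • 1) := ⟨_, rfl⟩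
  rw [← hNdef]
  obtain ⟨a0, ha0⟩ : ∃ j : Fin qs, (j:ℕ) < qb := ⟨⟨0, by omega⟩, show 0 < qb by omega⟩
  obtain ⟨a1, ha1⟩ : ∃ j : Fin qs, ¬ (j:ℕ) < qb := ⟨⟨qb, by omega⟩, show ¬ qb < qb by omega⟩
  have hNδ1 : ∀ j : Fin qs, (j:ℕ) < qb → ∀ i, N i j = N i a0 := by
    intro j hj i
    have h0 := hNeig l1 _ (hδ1 j a0 hj ha0)
    rw [← hNdef, hsingle N j a0] at h0
    have h1 : (l1 - τ) * (l1 - l2) * (l1 - l1) * l1 = 0 := by ring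
    rw [h1, zero_smul] at h0
    have h2 := congrFun h0 i
    simp only [Pi.zero_apply] at h2
    linarith [h2]
  have hNδ2 : ∀ j : Fin qs, ¬ (j:ℕ) < qb → ∀ i, N i j = N i a1 := by
    intro j hj i
    have h0 := hNeig l2 _ (hδ2 j a1 hj ha1)
    rw [← hNdef, hsingle N j a1] at h0
    have h1 : (l2 - τ) * (l2 - l2) * (l2 - l1) * l2 = 0 := by ring
    rw [h1, zero_smul] at h0
    have h2 := congrFun h0 i
    simp only [Pi.zero_apply] at h2
    linarith [h2]
  have hNx0 : N *ᵥ xv = 0 := by rw [hNdef]; exact hNx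
  have hNy0 : N *ᵥ yv = 0 := by rw [hNdef]; exact hNy
  ext i j
  rw [Matrix.zero_apply]
  by_cases hj : (j:ℕ) < qb
  · have h1 := congrFun hNx0 i
    rw [hmv] at h1
    simp only [Pi.zero_apply] at h1
    have h2 : ∀ s : Fin qs, N i s * xv s = (if (s:ℕ) < qb then N i a0 else 0) := by
      intro s
      rw [hxv s]
      by_cases hs : (s:ℕ) < qb
      · simp only [hs, if_true, mul_one]
        exact hNδ1 s hs i
      · simp [hs]
    simp only [h2] at h1
    rw [sum_if_lt qs qb hqble _ 0] at h1
    rw [mul_zero, add_zero] at h1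
    have h3 : N i a0 = 0 := (mul_eq_zero.mp h1).resolve_left (ne_of_gt hn1)
    rw [hNδ1 j hj i, h3]
  · have h1 := congrFun hNy0 i
    rw [hmv] at h1
    simp only [Pi.zero_apply] at h1
    have h2 : ∀ s : Fin qs, N i s * yv s = (if (s:ℕ) < qb then 0 else N i a1) := by
      intro s
      rw [hyv s]
      by_cases hs : (s:ℕ) < qb
      · simp [hs]
      · simp only [hs, if_false, mul_one]
        exact hNδ2 s hs i
    simp only [h2] at h1
    rw [sum_if_lt qs qb hqble 0 _] at h1
    rw [mul_zero, zero_add] at h1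
    have h3 : N i a1 = 0 := (mul_eq_zero.mp h1).resolve_left (ne_of_gt hn2)
    rw [hNδ2 j hj i, h3]

/-- Every eigenvalue of the nested-case transfer matrix `T`, regarded as a
matrix over `ℂ`, is a real number. -/
theorem nestedT_eigenvalues_real (qs qb : ℕ) (hqb : 2 ≤ qb) (hqs : 2 * qb ≤ qs)
    (γ ωin ωout : ℝ) (hγ : 1 < γ) (hω : ωout < ωin) (hω0 : 0 < ωout) :
    ∀ μ ∈ spectrum ℂ ((nestedT qs qb γ ωin ωout).map Complex.ofReal), μ.im = 0 := by
  obtain ⟨l1, l2, t, hN⟩ := nestedT_ann qs qb hqb hqs γ ωin ωout hγ hω hω0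
  intro μ hμ
  haveI : NeZero qs := ⟨by omega⟩
  set A : Matrix (Fin qs) (Fin qs) ℂ := (nestedT qs qb γ ωin ωout).map Complex.ofReal with hAdef
  have hmapsub : ∀ (c : ℝ),
      ((nestedT qs qb γ ωin ωout - c • 1).map Complex.ofReal) = A - (c : ℂ) • 1 := by
    intro c
    rw [Matrix.map_sub Complex.ofReal (fun a b => Complex.ofReal_sub a b), hAdef]
    congr 1
    ext i j
    simp only [Matrix.map_apply, Matrix.smul_apply, Matrix.one_apply, smul_eq_mul]
    split <;> simp
  have hmul : ∀ (X Y : Matrix (Fin qs) (Fin qs) ℝ),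
      (X * Y).map Complex.ofReal = X.map Complex.ofReal * Y.map Complex.ofReal := by
    intro X Y
    exact Matrix.map_mul (f := Complex.ofRealHom)
  have hAnn : A * (A - (l1:ℂ) • 1) * (A - (l2:ℂ) • 1) * (A - (t:ℂ) • 1) = 0 := by
    have h0 := congrArg (fun X : Matrix (Fin qs) (Fin qs) ℝ => X.map Complex.ofReal) hN
    rw [hmul, hmul, hmul, hmapsub, hmapsub, hmapsub, ← hAdef] at h0
    have hz : (0 : Matrix (Fin qs) (Fin qs) ℝ).map Complex.ofReal = 0 := by
      ext i j; simp
    rw [hz] at h0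
    exact h0
  set p : Polynomial ℂ :=
    Polynomial.X * (Polynomial.X - Polynomial.C (l1:ℂ)) * (Polynomial.X - Polynomial.C (l2:ℂ)) *
      (Polynomial.X - Polynomial.C (t:ℂ)) with hpdef
  have haev : (Polynomial.aeval A) p = 0 := by
    rw [hpdef]
    simp only [_root_.map_mul, _root_.map_sub, Polynomial.aeval_X, Polynomial.aeval_C,
      Algebra.algebraMap_eq_smul_one]
    exact hAnn
  have hspec := spectrum.subset_polynomial_aeval A p ⟨μ, hμ, rfl⟩
  rw [haev, spectrum.zero_eq] at hspec
  have heval : Polynomial.eval μ p = 0 := Set.mem_singleton_iff.mp hspec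
  rw [hpdef] at heval
  simp only [Polynomial.eval_mul, Polynomial.eval_sub, Polynomial.eval_X, Polynomial.eval_C]
    at heval
  rcases mul_eq_zero.mp heval with h | h
  · rcases mul_eq_zero.mp h with h' | h'
    · rcases mul_eq_zero.mp h' with h'' | h''
      · rw [h'']; rfl
      · rw [sub_eq_zero.mp h'']; exact Complex.ofReal_im l1
    · rw [sub_eq_zero.mp h']; exact Complex.ofReal_im l2
  · rw [sub_eq_zero.mp h]; exact Complex.ofReal_im t
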